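/- Let U be an ℵ₁-incomplete ultrafilter over κ and let m be a σ-additive probability measure on a σ-algebra of subsets of κ^ω containing all clopen sets. Then there is a U-null set X ⊆ κ^ω with m(X) = 1. -/

import Mathlib

universe u

namespace UMeas

variable {A : Type u}

/-- The first `n` values of an infinite sequence, as a list. -/
def seg (s : ℕ → A) (n : ℕ) : List A := List.ofFn (fun i : Fin n => s i)

/-- `T` is a `U`-branching tree: a set of finite sequences closed under initial
segments, containing the empty sequence, whose branching sets are in `U`. -/
def IsUTree (U : Ultrafilter A) (T : Set (List A)) : Prop :=
  ([] ∈ T) ∧ (∀ σ ∈ T, ∀ τ : List A, τ <+: σ → τ ∈ T) ∧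
    ∀ σ ∈ T, {a : A | σ ++ [a] ∈ T} ∈ U

/-- The set of infinite branches through `T`. -/
def branches (T : Set (List A)) : Set (ℕ → A) := {s | ∀ n, seg s n ∈ T}

/-- Concatenation `σ⌢s` of a finite sequence with an infinite sequence. -/
def app (σ : List A) (s : ℕ → A) : ℕ → A :=
  fun n => if h : n < σ.length then σ.get ⟨n, h⟩ else s (n - σ.length)

/-- The section `X↾σ = {s | σ⌢s ∈ X}`. -/
def sect (X : Set (ℕ → A)) (σ : List A) : Set (ℕ → A) := {s | app σ s ∈ X}

def ULarge (U : Ultrafilter A) (X : Set (ℕ → A)) : Prop :=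
  ∃ T, IsUTree U T ∧ branches T ⊆ X

def USmall (U : Ultrafilter A) (X : Set (ℕ → A)) : Prop :=
  ∃ T, IsUTree U T ∧ branches T ∩ X = ∅

def UDetermined (U : Ultrafilter A) (X : Set (ℕ → A)) : Prop :=
  ULarge U X ∨ USmall U X

def UNull (U : Ultrafilter A) (X : Set (ℕ → A)) : Prop :=
  ∀ σ : List A, USmall U (sect X σ)

def UMeasurable (U : Ultrafilter A) (X : Set (ℕ → A)) : Prop :=
  ∀ σ : List A, UDetermined U (sect X σ)

end UMeas

open MeasureTheory Filter Topology Set ENNReal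

theorem stmt11 {A : Type u} [TopologicalSpace A] [DiscreteTopology A]
    {m0 : MeasurableSpace (ℕ → A)} (U : Ultrafilter A)
    (hU : ∃ f : ℕ → Set A, (∀ n, f n ∈ U) ∧ (⋂ n, f n) ∉ U)
    (m : MeasureTheory.Measure (ℕ → A)) [MeasureTheory.IsProbabilityMeasure m]
    (hm : ∀ s : Set (ℕ → A), IsClopen s → MeasurableSet s) :
    ∃ X : Set (ℕ → A), UMeas.UNull U X ∧ m X = 1 := by
  classical
  obtain ⟨f, hfU, hfi⟩ := hU
  letI : MeasurableSpace A := ⊤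
  have hmeas : ∀ p : ℕ, Measurable (fun s : ℕ → A => s p) := by
    intro p B _
    exact hm _ (IsClopen.preimage (isClopen_discrete B) (continuous_apply p))
  set ν : Measure A :=
    Measure.sum (fun p : ℕ => ((2 : ℝ≥0∞)⁻¹ ^ p) • Measure.map (fun s => s p) m) with hν
  have hνB : ∀ B : Set A,
      ν B = ∑' p : ℕ, (2 : ℝ≥0∞)⁻¹ ^ p * m {s : ℕ → A | s p ∈ B} := by
    intro B
    rw [hν, Measure.sum_apply _ MeasurableSpace.measurableSet_top]
    congr 1; ext p
    rw [Measure.smul_apply, Measure.map_apply (hmeas p) MeasurableSpace.measurableSet_top]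
    rfl
  have hterm : ∀ (B : Set A) (p : ℕ),
      (2 : ℝ≥0∞)⁻¹ ^ p * m {s : ℕ → A | s p ∈ B} ≤ ν B := by
    intro B p
    rw [hνB B]
    exact ENNReal.le_tsum p
  have hνfin : ∀ B : Set A, ν B ≠ ∞ := by
    intro B
    rw [hνB B]
    have h1 : ∑' p : ℕ, (2 : ℝ≥0∞)⁻¹ ^ p * m {s : ℕ → A | s p ∈ B}
        ≤ ∑' p : ℕ, (2 : ℝ≥0∞)⁻¹ ^ p := by
      apply ENNReal.tsum_le_tsum
      intro p
      calc (2 : ℝ≥0∞)⁻¹ ^ p * m {s : ℕ → A | s p ∈ B}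
          ≤ (2 : ℝ≥0∞)⁻¹ ^ p * 1 := by gcongr; exact prob_le_one
        _ = (2 : ℝ≥0∞)⁻¹ ^ p := mul_one _
    refine ne_of_lt (lt_of_le_of_lt h1 ?_)
    rw [ENNReal.tsum_geometric]
    simp [ENNReal.inv_lt_top]
  -- key lemma: ν-small sets in U
  have key : ∀ ε : ℝ≥0∞, ε ≠ 0 → ∃ B ∈ U, ν B ≤ ε := by
    intro ε hε
    set g : ℕ → Set A := fun n => (⋂ k ∈ Finset.range (n + 1), f k) ∩ (⋂ k, f k)ᶜ with hg
    have hgU : ∀ n, g n ∈ U := by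
      intro n
      apply Filter.inter_mem
      · exact (Filter.biInter_finset_mem _).2 fun k _ => hfU k
      · exact Ultrafilter.compl_mem_iff_notMem.2 hfi
    have hganti : Antitone g := by
      intro a b hab x hx
      simp only [hg, Set.mem_inter_iff, Set.mem_iInter] at hx ⊢
      refine ⟨fun k hk => hx.1 k ?_, hx.2⟩
      simp only [Finset.mem_range] at hk ⊢
      omega
    have hgempty : (⋂ n, g n) = ∅ := by
      ext x
      simp only [Set.mem_iInter, Set.mem_empty_iff_false, iff_false]
      intro h
      have hx : x ∈ ⋂ k, f k := by
        refine Set.mem_iInter.2 fun k => ?_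
        have := (h k).1
        simp only [Set.mem_iInter] at this
        exact this k (by simp)
      exact ((h 0).2 hx)
    have htend : Tendsto (ν ∘ g) atTop (𝓝 (ν (⋂ n, g n))) :=
      tendsto_measure_iInter_atTop (fun n => (MeasurableSpace.measurableSet_top).nullMeasurableSet)
        hganti ⟨0, hνfin _⟩
    rw [hgempty, measure_empty] at htend
    have hev := htend.eventually_lt_const (lt_of_le_of_ne zero_le (Ne.symm hε))
    obtain ⟨n, hn⟩ := hev.exists
    exact ⟨g n, hgU n, hn.le⟩
  -- choose the sets B n
  have hpow : ∀ n : ℕ, ((2 : ℝ≥0∞)⁻¹ ^ (2 * n + 2)) ≠ 0 := by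
    intro n
    apply pow_ne_zero
    simp
  choose B hBU hBsmall using fun n : ℕ => key ((2 : ℝ≥0∞)⁻¹ ^ (2 * n + 2)) (hpow n)
  -- the tree
  set T : Set (List A) := {τ | ∀ (i : ℕ) (h : i < τ.length), τ.get ⟨i, h⟩ ∈ B i} with hT
  have hTtree : UMeas.IsUTree U T := by
    refine ⟨?_, ?_, ?_⟩
    · intro i h; exact absurd h (Nat.not_lt_zero i)
    · intro σ hσ τ hpre i h
      have hlen : τ.length ≤ σ.length := hpre.length_le
      have : τ.get ⟨i, h⟩ = σ.get ⟨i, lt_of_lt_of_le h hlen⟩ := by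
        simp only [List.get_eq_getElem]
        exact hpre.getElem h
      rw [this]
      exact hσ i _
    · intro σ hσ
      refine Filter.mem_of_superset (hBU σ.length) ?_
      intro a ha i h
      simp only [List.get_eq_getElem]
      have h' : i < σ.length + 1 := by simpa using h
      rcases Nat.lt_or_ge i σ.length with hi | hi
      · rw [List.getElem_append_left hi]
        exact hσ i hi
      · have hie : i = σ.length := by omega
        subst hie
        simpa using ha
  have hbranch : UMeas.branches T ⊆ {s : ℕ → A | ∀ i, s i ∈ B i} := by
    intro s hs i
    have h1 : UMeas.seg s (i + 1) ∈ T := hs (i + 1)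
    have hl : i < (UMeas.seg s (i + 1)).length := by
      simp [UMeas.seg]
    have h2 := h1 i hl
    have : (UMeas.seg s (i + 1)).get ⟨i, hl⟩ = s i := by
      simp only [UMeas.seg, List.get_eq_getElem]
      rw [List.getElem_ofFn]
    rwa [this] at h2
  -- the null set
  set Y : Set (ℕ → A) := ⋃ k : ℕ, {s : ℕ → A | ∀ i, s (k + i) ∈ B i} with hY
  refine ⟨Yᶜ, ?_, ?_⟩
  · -- U-null
    intro σ
    refine ⟨T, hTtree, ?_⟩
    rw [Set.eq_empty_iff_forall_notMem]
    rintro s ⟨hs1, hs2⟩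
    apply hs2
    refine Set.mem_iUnion.2 ⟨σ.length, ?_⟩
    intro i
    have hb := hbranch hs1 i
    have : UMeas.app σ s (σ.length + i) = s i := by
      simp only [UMeas.app]
      rw [dif_neg (by omega)]
      congr 1
      omega
    rwa [this]
  · -- measure 1
    have hYm : m Y = 0 := by
      have hle : m Y ≤ ∑' k : ℕ, m {s : ℕ → A | ∀ i, s (k + i) ∈ B i} :=
        measure_iUnion_le _
      have hzero : ∀ k : ℕ, m {s : ℕ → A | ∀ i, s (k + i) ∈ B i} = 0 := by
        intro k
        have hbd : ∀ j : ℕ, m {s : ℕ → A | ∀ i, s (k + i) ∈ B i}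
            ≤ (2 : ℝ≥0∞) ^ k * (2 : ℝ≥0∞)⁻¹ ^ j := by
          intro j
          have h1 : m {s : ℕ → A | ∀ i, s (k + i) ∈ B i}
              ≤ m {s : ℕ → A | s (k + j) ∈ B j} :=
            measure_mono (fun s hs => hs j)
          have h2 : (2 : ℝ≥0∞)⁻¹ ^ (k + j) * m {s : ℕ → A | s (k + j) ∈ B j}
              ≤ (2 : ℝ≥0∞)⁻¹ ^ (2 * j + 2) :=
            le_trans (hterm (B j) (k + j)) (hBsmall j)
          have hc0 : ((2 : ℝ≥0∞)⁻¹ ^ (k + j)) ≠ 0 := by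
            apply pow_ne_zero; simp
          have hctop : ((2 : ℝ≥0∞)⁻¹ ^ (k + j)) ≠ ∞ := by
            apply ENNReal.pow_ne_top
            simp [ENNReal.inv_lt_top]
          have h3 : m {s : ℕ → A | s (k + j) ∈ B j}
              ≤ ((2 : ℝ≥0∞)⁻¹ ^ (k + j))⁻¹ * (2 : ℝ≥0∞)⁻¹ ^ (2 * j + 2) := by
            rw [← one_mul (m {s : ℕ → A | s (k + j) ∈ B j}),
              ← ENNReal.inv_mul_cancel hc0 hctop, mul_assoc]
            exact mul_le_mul_right h2 _
          have h4 : ((2 : ℝ≥0∞)⁻¹ ^ (k + j))⁻¹ * (2 : ℝ≥0∞)⁻¹ ^ (2 * j + 2)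
              ≤ (2 : ℝ≥0∞) ^ k * (2 : ℝ≥0∞)⁻¹ ^ j := by
            rw [← ENNReal.inv_pow, inv_inv]
            have he : (2 : ℝ≥0∞) ^ (k + j) * (2 : ℝ≥0∞)⁻¹ ^ (2 * j + 2)
                = (2 : ℝ≥0∞) ^ k * ((2 : ℝ≥0∞) ^ j * (2 : ℝ≥0∞)⁻¹ ^ j)
                  * (2 : ℝ≥0∞)⁻¹ ^ (j + 2) := by
              rw [pow_add]
              have : (2 : ℝ≥0∞)⁻¹ ^ (2 * j + 2) = (2 : ℝ≥0∞)⁻¹ ^ j * (2 : ℝ≥0∞)⁻¹ ^ (j + 2) := by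
                rw [← pow_add]; congr 1; omega
              rw [this]; ring
            rw [he, ← mul_pow, ENNReal.mul_inv_cancel (by norm_num) (by norm_num), one_pow,
              mul_one]
            have hstep : (2 : ℝ≥0∞)⁻¹ ^ (j + 2) ≤ (2 : ℝ≥0∞)⁻¹ ^ j := by
              rw [pow_add]
              exact mul_le_of_le_one_right'
                (pow_le_one' (ENNReal.inv_le_one.2 one_le_two) 2)
            exact mul_le_mul_right hstep _
          exact le_trans h1 (le_trans h3 h4)
        have htend2 : Tendsto (fun j : ℕ => (2 : ℝ≥0∞) ^ k * (2 : ℝ≥0∞)⁻¹ ^ j) atTop (𝓝 0) := by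
          have h0 : Tendsto (fun j : ℕ => (2 : ℝ≥0∞)⁻¹ ^ j) atTop (𝓝 0) :=
            ENNReal.tendsto_pow_atTop_nhds_zero_of_lt_one (by
              simp [ENNReal.inv_lt_one])
          have h1 : Tendsto (fun j : ℕ => (2 : ℝ≥0∞) ^ k * (2 : ℝ≥0∞)⁻¹ ^ j) atTop
              (𝓝 ((2 : ℝ≥0∞) ^ k * 0)) :=
            ENNReal.Tendsto.const_mul h0
              (Or.inr (ENNReal.pow_ne_top (by norm_num : (2 : ℝ≥0∞) ≠ ⊤)))
          simpa using h1
        have := ge_of_tendsto' htend2 hbd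
        exact le_antisymm this zero_le
      have hts : (∑' k : ℕ, m {s : ℕ → A | ∀ i, s (k + i) ∈ B i}) = 0 := by
        simp [hzero]
      exact le_antisymm (hts ▸ hle) zero_le
    have h1 : (1 : ℝ≥0∞) ≤ m Yᶜ := by
      have := measure_union_le (μ := m) Y Yᶜ
      rw [Set.union_compl_self, measure_univ, hYm, zero_add] at this
      exact this
    exact le_antisymm prob_le_one h1
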